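/- Fix n ≥ 1 and t-dependent functions u_{n-1}, u_n, u_{n+1}, u_{n+2} (and u_{n-2} when n ≥ 2; set u_0 arbitrary with u_0 ≡ 0 when n = 1), all differentiable and with u_n nowhere zero. Assume the Freud string equations u_k (u_{k-1} + u_k + u_{k+1}) + 2t u_k = k hold for k = n-1, n, n+1, and the Langmuir flow u_k' = u_k (u_{k-1} - u_{k+1}) holds for k = n-1, n, n+1. Then u_n satisfies the fourth Painlevé equation u_n'' = (u_n')^2/(2 u_n) + (1/(2 u_n)) (3 u_n^2 + 2 t u_n - n)(u_n^2 + 2 t u_n + n). -/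

import Mathlib

/-- Freud string equations plus the Langmuir flow imply the fourth Painlevé equation
for `u_n = a_n²` (weight `exp(-x⁴/4 - t x²)`). -/
theorem painleveIV_from_freud (n : ℕ) (hn : 1 ≤ n) (u : ℕ → ℝ → ℝ)
    (hu0 : n = 1 → ∀ t, u 0 t = 0)
    (hne : ∀ t, u n t ≠ 0)
    (hdiff : ∀ k ∈ Finset.Icc (n - 1) (n + 1), Differentiable ℝ (u k))
    (hstring : ∀ t : ℝ, ∀ k ∈ Finset.Icc (n - 1) (n + 1),
      u k t * (u (k - 1) t + u k t + u (k + 1) t) + 2 * t * u k t = k)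
    (hflow : ∀ t : ℝ, ∀ k ∈ Finset.Icc (n - 1) (n + 1),
      deriv (u k) t = u k t * (u (k - 1) t - u (k + 1) t)) :
    ∀ t : ℝ, deriv (deriv (u n)) t =
      (deriv (u n) t) ^ 2 / (2 * u n t) +
        (1 / (2 * u n t)) * (3 * (u n t) ^ 2 + 2 * t * u n t - n) *
          ((u n t) ^ 2 + 2 * t * u n t + n) := by
  intro t
  have mA : n - 1 ∈ Finset.Icc (n - 1) (n + 1) := Finset.mem_Icc.mpr ⟨le_rfl, by omega⟩
  have mB : n ∈ Finset.Icc (n - 1) (n + 1) := Finset.mem_Icc.mpr ⟨Nat.sub_le n 1, by omega⟩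
  have mC : n + 1 ∈ Finset.Icc (n - 1) (n + 1) := Finset.mem_Icc.mpr ⟨by omega, le_rfl⟩
  have dA := hdiff _ mA
  have dB := hdiff _ mB
  have dC := hdiff _ mC
  have hindex1 : n - 1 + 1 = n := by omega
  have hderivB : deriv (u n) = fun s => u n s * (u (n - 1) s - u (n + 1) s) := by
    funext s; exact hflow s n mB
  have hA' : deriv (u (n - 1)) t =
      (n : ℝ) - 1 - 2 * t * u (n - 1) t - (u (n - 1) t) ^ 2 - 2 * u (n - 1) t * u n t := by
    have hf := hflow t (n - 1) mA
    have hs := hstring t (n - 1) mA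
    rw [hindex1] at hf hs
    rw [Nat.cast_sub hn] at hs
    push_cast at hs
    linear_combination hf + hs
  have hC' : deriv (u (n + 1)) t =
      2 * u n t * u (n + 1) t + (u (n + 1) t) ^ 2 + 2 * t * u (n + 1) t - ((n : ℝ) + 1) := by
    have hf := hflow t (n + 1) mC
    have hs := hstring t (n + 1) mC
    simp only [Nat.add_sub_cancel] at hf hs
    push_cast at hs
    linear_combination hf - hs
  have hBt := hflow t n mB
  have hSt := hstring t n mB
  have h2 : deriv (deriv (u n)) t =
      deriv (u n) t * (u (n - 1) t - u (n + 1) t) +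
        u n t * (deriv (u (n - 1)) t - deriv (u (n + 1)) t) := by
    conv_lhs => rw [hderivB]
    rw [deriv_fun_mul (d := fun s => u (n - 1) s - u (n + 1) s) (dB t) ((dA t).sub (dC t)), deriv_fun_sub (dA t) (dC t)]
  have hb := hne t
  have hc : u (n + 1) t =
      ((n : ℝ) - (u n t) ^ 2 - 2 * t * u n t) / u n t - u (n - 1) t := by
    field_simp
    linear_combination hSt
  rw [h2, hA', hC', hBt, hc]
  field_simp
  ring
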